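/- Let β > 0 and ε ≥ 0, and let v : [0,∞) → [0,∞) be differentiable with v'(t) ≤ −2β·v(t) + ε·√(v(t)) for all t ≥ 0. Then for every t ≥ 0, √(v(t)) ≤ e^{−βt}·√(v(0)) + ε/(2β). -/

import Mathlib

open Set

/-- Grönwall-type lemma: if `v : [0,∞) → [0,∞)` is differentiable with
`v'(t) ≤ -2β·v(t) + ε·√(v(t))` for all `t ≥ 0`, then
`√(v(t)) ≤ e^{-βt}·√(v(0)) + ε/(2β)` for every `t ≥ 0`. -/
theorem sqrt_gronwall
    (β ε : ℝ) (hβ : 0 < β) (hε : 0 ≤ ε)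
    (v v' : ℝ → ℝ)
    (hv_nonneg : ∀ t ≥ (0:ℝ), 0 ≤ v t)
    (hv_deriv : ∀ t ≥ (0:ℝ), HasDerivWithinAt v (v' t) (Set.Ici 0) t)
    (hv_ineq : ∀ t ≥ (0:ℝ), v' t ≤ -2 * β * v t + ε * Real.sqrt (v t)) :
    ∀ t ≥ (0:ℝ),
      Real.sqrt (v t) ≤ Real.exp (-β * t) * Real.sqrt (v 0) + ε / (2 * β) := by
  intro t ht
  set a : ℝ := Real.sqrt (v 0) with ha_def
  have ha : 0 ≤ a := Real.sqrt_nonneg _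
  set c : ℝ := ε / (2 * β) with hc_def
  have hc : 0 ≤ c := div_nonneg hε (by linarith)
  have hεc : ε = 2 * β * c := by
    rw [hc_def]; field_simp
  -- Main estimate: for every δ > 0, v t ≤ (a * exp (-β t) + c + δ)^2
  have key : ∀ δ > (0:ℝ), v t ≤ (a * Real.exp (-β * t) + c + δ) ^ 2 := by
    intro δ hδ
    set B : ℝ → ℝ := fun x => (a * Real.exp (-β * x) + c + δ) ^ 2 with hB_def
    set B' : ℝ → ℝ := fun x =>
      2 * (a * Real.exp (-β * x) + c + δ) * (a * (Real.exp (-β * x) * (-β))) with hB'_def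
    have hB : ∀ x, HasDerivAt B (B' x) x := by
      intro x
      have h1 : HasDerivAt (fun x : ℝ => -β * x) (-β) x := by
        simpa using (hasDerivAt_id x).const_mul (-β)
      have h2 : HasDerivAt (fun x : ℝ => Real.exp (-β * x)) (Real.exp (-β * x) * (-β)) x :=
        h1.exp
      have h3 : HasDerivAt (fun x : ℝ => a * Real.exp (-β * x) + c + δ)
          (a * (Real.exp (-β * x) * (-β))) x := by
        simpa using ((h2.const_mul a).add_const c).add_const δ
      simpa [hB_def, hB'_def, pow_two, mul_comm, mul_assoc, mul_left_comm] using
        (h3.fun_mul h3).congr_deriv (by ring)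
    have hcont : ContinuousOn v (Icc 0 t) := fun x hx =>
      ((hv_deriv x hx.1).continuousWithinAt).mono (Icc_subset_Ici_self)
    have hderiv : ∀ x ∈ Ico (0:ℝ) t, HasDerivWithinAt v (v' x) (Ici x) x := fun x hx =>
      (hv_deriv x hx.1).mono (Ici_subset_Ici.2 hx.1)
    have hB0 : v 0 ≤ B 0 := by
      have : v 0 = a ^ 2 := (Real.sq_sqrt (hv_nonneg 0 le_rfl)).symm
      rw [this, hB_def]
      simp only [mul_zero, neg_zero, Real.exp_zero, mul_one]
      nlinarith
    have hbound : ∀ x ∈ Ico (0:ℝ) t, v x = B x → v' x < B' x := by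
      intro x hx heq
      have hx0 : (0:ℝ) ≤ x := hx.1
      have hE : 0 < Real.exp (-β * x) := Real.exp_pos _
      set w : ℝ := a * Real.exp (-β * x) + c + δ with hw_def
      have hw : 0 < w := by positivity
      have hsq : Real.sqrt (v x) = w := by
        rw [heq, hB_def]
        exact Real.sqrt_sq hw.le
      have hineq := hv_ineq x hx0
      rw [hsq, heq] at hineq
      have hBx : B x = w ^ 2 := rfl
      have hB'x : B' x = 2 * w * (a * (Real.exp (-β * x) * (-β))) := rfl
      rw [hBx] at hineq
      rw [hB'x]
      have hrw : -2 * β * w ^ 2 + ε * w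
          = 2 * w * (a * (Real.exp (-β * x) * (-β))) - 2 * β * w * δ := by
        rw [hεc, hw_def]; ring
      rw [hrw] at hineq
      have hpos : 0 < 2 * β * w * δ := by positivity
      linarith
    have := image_le_of_deriv_right_lt_deriv_boundary hcont hderiv hB0 hB hbound
      (x := t) ⟨ht, le_rfl⟩
    exact this
  -- Conclude by letting δ → 0
  have hb : 0 ≤ a * Real.exp (-β * t) + c := by positivity
  have : ∀ δ > (0:ℝ), Real.sqrt (v t) ≤ a * Real.exp (-β * t) + c + δ := by
    intro δ hδ
    have h1 := key δ hδ
    calc Real.sqrt (v t) ≤ Real.sqrt ((a * Real.exp (-β * t) + c + δ) ^ 2) :=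
          Real.sqrt_le_sqrt h1
      _ = a * Real.exp (-β * t) + c + δ := Real.sqrt_sq (by positivity)
  have := le_of_forall_pos_le_add this
  linarith [this]
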